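/- Let n ≥ 2, let x be a nonzero vector in ℝ^{n−1}, and let B be a real symmetric (n−1)×(n−1) matrix. Define u ∈ ℝⁿ as the vector whose first component is ‖x‖ and whose remaining components are those of x, set P = Iₙ − 2·u·uᵀ/‖u‖², and let A be the n×n block matrix with a zero first row and first column and lower-right block B. Then Pᵀ·A·P is the block matrix whose (1,1) entry is d = xᵀ·B·x/‖x‖², whose first column below the (1,1) entry is y = −B·x/‖x‖ + x·(xᵀ·B·x)/‖x‖³, whose first row right of the (1,1) entry is yᵀ, and whose lower-right (n−1)×(n−1) block is B' = (I − x·xᵀ/‖x‖²)·B·(I − x·xᵀ/‖x‖²). -/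

import Mathlib

open Matrix

private lemma aux_mul_vecMulVec {n : Type*} [Fintype n] (A : Matrix n n ℝ) (u v : n → ℝ) :
    A * vecMulVec u v = vecMulVec (A *ᵥ u) v := by
  ext i j
  simp [vecMulVec_apply, mul_apply, mulVec, dotProduct, Finset.sum_mul]
  exact Finset.sum_congr rfl fun a _ => by ring

private lemma aux_vecMulVec_mul {n : Type*} [Fintype n] (A : Matrix n n ℝ) (u v : n → ℝ) :
    vecMulVec u v * A = vecMulVec u (v ᵥ* A) := by
  ext i j
  simp [vecMulVec_apply, mul_apply, vecMul, dotProduct, Finset.mul_sum]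
  exact Finset.sum_congr rfl fun a _ => by ring

private lemma aux_vecMulVec_mul_vecMulVec {n : Type*} [Fintype n] (u v w z : n → ℝ) :
    vecMulVec u v * vecMulVec w z = (v ⬝ᵥ w) • vecMulVec u z := by
  ext i j
  simp [vecMulVec_apply, mul_apply, dotProduct, Finset.sum_mul]
  exact Finset.sum_congr rfl fun a _ => by ring

private lemma aux_vecMulVec_transpose {n : Type*} (u v : n → ℝ) :
    (vecMulVec u v)ᵀ = vecMulVec v u := by
  ext i j; simp [vecMulVec_apply, mul_comm]

private lemma aux_sandwich {n : Type*} [Fintype n] [DecidableEq n]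
    (M : Matrix n n ℝ) (v w : n → ℝ) (c q : ℝ)
    (hvM : v ᵥ* M = w) (hMv : M *ᵥ v = w) (hq : w ⬝ᵥ v = q) :
    (1 - c • vecMulVec v v) * M * (1 - c • vecMulVec v v)
      = M - c • vecMulVec v w - c • vecMulVec w v + (c * (c * q)) • vecMulVec v v := by
  simp only [sub_mul, mul_sub, one_mul, mul_one, Matrix.smul_mul, Matrix.mul_smul, smul_smul]
  rw [aux_vecMulVec_mul M v v, hvM, aux_mul_vecMulVec M v v, hMv,
    aux_vecMulVec_mul_vecMulVec v w v v, hq]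
  module

/-- **Zero-insertion Householder step (Eqs. S5–S8).** With `x ∈ ℝ^{n-1}` nonzero
(here `n - 1 = k + 1`, encoding `n ≥ 2`), `B` real symmetric, `u = (‖x‖, x)`,
`P = I - 2 u uᵀ / ‖u‖²`, and `A` the block matrix with zero first row and column
and lower-right block `B`, the matrix `Pᵀ A P` has `(1,1)` entry
`d = xᵀ B x / ‖x‖²`, first column/row below/right of it given by
`y = -Bx/‖x‖ + x (xᵀ B x)/‖x‖³`, and lower-right block
`B' = (I - x xᵀ/‖x‖²) B (I - x xᵀ/‖x‖²)`. -/
theorem zero_insertion_householder_step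
    (k : ℕ) (x : Fin (k + 1) → ℝ) (hx : x ≠ 0)
    (B : Matrix (Fin (k + 1)) (Fin (k + 1)) ℝ) (hB : B.IsSymm)
    (u : Fin 1 ⊕ Fin (k + 1) → ℝ)
    (hu : u = Sum.elim (fun _ => Real.sqrt (x ⬝ᵥ x)) x)
    (P A : Matrix (Fin 1 ⊕ Fin (k + 1)) (Fin 1 ⊕ Fin (k + 1)) ℝ)
    (hP : P = 1 - (2 / (u ⬝ᵥ u)) • Matrix.vecMulVec u u)
    (hA : A = Matrix.fromBlocks 0 0 0 B)
    (d : ℝ) (hd : d = (x ⬝ᵥ B.mulVec x) / (x ⬝ᵥ x))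
    (y : Fin (k + 1) → ℝ)
    (hy : y = (-(Real.sqrt (x ⬝ᵥ x))⁻¹) • B.mulVec x
        + ((x ⬝ᵥ B.mulVec x) / (Real.sqrt (x ⬝ᵥ x)) ^ 3) • x)
    (B' : Matrix (Fin (k + 1)) (Fin (k + 1)) ℝ)
    (hB' : B' = (1 - (x ⬝ᵥ x)⁻¹ • Matrix.vecMulVec x x) * B
        * (1 - (x ⬝ᵥ x)⁻¹ • Matrix.vecMulVec x x)) :
    Pᵀ * A * P = Matrix.fromBlocks
      (Matrix.of fun _ _ => d)
      (Matrix.of fun _ j => y j)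
      (Matrix.of fun i _ => y i)
      B' := by
  have ht0 : (x ⬝ᵥ x) ≠ 0 := fun h => hx (dotProduct_self_eq_zero.mp h)
  have htpos : 0 < x ⬝ᵥ x :=
    lt_of_le_of_ne (Finset.sum_nonneg fun i _ => mul_self_nonneg _) (Ne.symm ht0)
  set s : ℝ := Real.sqrt (x ⬝ᵥ x) with hsdef
  have hs2 : s * s = x ⬝ᵥ x := Real.mul_self_sqrt htpos.le
  have hsne : s ≠ 0 := (Real.sqrt_pos.mpr htpos).ne'
  set q : ℝ := x ⬝ᵥ B.mulVec x with hqdef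
  set c : ℝ := (x ⬝ᵥ x)⁻¹ with hcdef
  -- ‖u‖² = 2‖x‖²
  have huu : u ⬝ᵥ u = 2 * (x ⬝ᵥ x) := by
    have h1 : u ⬝ᵥ u = s * s + x ⬝ᵥ x := by
      subst hu; simp [dotProduct, Fintype.sum_sum_type]
    rw [h1, hs2]; ring
  have hc : 2 / (u ⬝ᵥ u) = c := by
    rw [huu, hcdef]; field_simp
  have hPt : Pᵀ = P := by
    rw [hP, transpose_sub, transpose_one, transpose_smul, aux_vecMulVec_transpose]
  -- A acting on u
  have hAsymm : Aᵀ = A := by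
    rw [hA, fromBlocks_transpose, hB.eq]; simp
  have hAu : A *ᵥ u = Sum.elim (fun _ => (0:ℝ)) (B *ᵥ x) := by
    rw [hA, hu]
    funext i
    rcases i with i | i <;>
      simp [Matrix.mulVec, dotProduct, Fintype.sum_sum_type, Matrix.fromBlocks]
  have huA : u ᵥ* A = Sum.elim (fun _ => (0:ℝ)) (B *ᵥ x) := by
    rw [← hAsymm, Matrix.vecMul_transpose, hAu]
  have hdot : Sum.elim (fun _ => (0:ℝ)) (B *ᵥ x) ⬝ᵥ u = q := by
    rw [hu]
    have h2 : Sum.elim (fun (_ : Fin 1) => (0:ℝ)) (B *ᵥ x) ⬝ᵥ Sum.elim (fun _ => s) x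
        = (B *ᵥ x) ⬝ᵥ x := by
      simp [dotProduct, Fintype.sum_sum_type]
    rw [h2, dotProduct_comm]
  -- x acting on B
  have hxB : x ᵥ* B = B *ᵥ x := by
    conv_lhs => rw [← hB.eq]
    rw [Matrix.vecMul_transpose]
  have hdot2 : (B *ᵥ x) ⬝ᵥ x = q := (dotProduct_comm _ _).trans hqdef.symm
  -- expand both sandwiches
  have expand : Pᵀ * A * P
      = A - c • vecMulVec u (Sum.elim (fun _ => (0:ℝ)) (B *ᵥ x))
        - c • vecMulVec (Sum.elim (fun _ => (0:ℝ)) (B *ᵥ x)) u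
        + (c * (c * q)) • vecMulVec u u := by
    rw [hPt, hP, hc]
    exact aux_sandwich A u _ c q huA hAu hdot
  have hB'alt : B' = B - c • vecMulVec x (B *ᵥ x) - c • vecMulVec (B *ᵥ x) x
      + (c * (c * q)) • vecMulVec x x := by
    rw [hB']
    exact aux_sandwich B x _ c q hxB rfl hdot2
  rw [expand]
  ext i j
  rcases i with i | i <;> rcases j with j | j <;>
    simp only [hA, hu, hd, hy, hB'alt, Matrix.sub_apply, Matrix.add_apply, Matrix.smul_apply, vecMulVec_apply,
      fromBlocks_apply₁₁, fromBlocks_apply₁₂, fromBlocks_apply₂₁, fromBlocks_apply₂₂,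
      Sum.elim_inl, Sum.elim_inr, of_apply, Pi.add_apply, Pi.smul_apply,
      smul_eq_mul, Matrix.zero_apply]
  all_goals simp only [hcdef]
  all_goals rw [← hs2]
  all_goals field_simp
  all_goals ring
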